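/- Let y^{(n)} ∈ ℝ_{>0}^d with y^{(n)} → y ∈ ℝ_{>0}^d and n y^{(n)} ∈ ℕ^d. Then the quantity Γ(n‖y^{(n)}‖ + d) / ∏_{i=1}^d Γ(n y^{(n)}_i + 1), multiplied by ε^{n y^{(n)}_min} for any ε satisfying 0 < ε < ∏_{i=1}^d (y_i/‖y‖)^{y_i/y_min}, converges to 0 as n → ∞, where y_min = min_i y_i and y^{(n)}_min = min_i y^{(n)}_i. -/

import Mathlib

open Finset Filter

section NatLemmas
open Nat

lemma choose_mul_le (a b : ℕ) : (a+b).choose a * (a^a * b^b) ≤ (a+b)^(a+b) := by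
  calc (a+b).choose a * (a^a * b^b) = a^a * b^(a+b-a) * (a+b).choose a := by
        rw [Nat.add_sub_cancel_left]; ring
    _ ≤ ∑ k ∈ Finset.range (a+b+1), a^k * b^(a+b-k) * (a+b).choose k :=
        Finset.single_le_sum (f := fun k => a^k * b^(a+b-k) * (a+b).choose k)
          (fun k _ => Nat.zero_le _) (Finset.mem_range.2 (by omega))
    _ = (a+b)^(a+b) := (add_pow a b (a+b)).symm

lemma multinomial_le {ι : Type*} [DecidableEq ι] (s : Finset ι) (m : ι → ℕ) :
    (∑ i ∈ s, m i)! * ∏ i ∈ s, (m i)^(m i) ≤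
      (∑ i ∈ s, m i)^(∑ i ∈ s, m i) * ∏ i ∈ s, (m i)! := by
  induction s using Finset.induction_on with
  | empty => simp
  | @insert a s h ih =>
    rw [sum_insert h, prod_insert h, prod_insert h]
    set A := m a
    set B := ∑ i ∈ s, m i
    have h1 : (A+B).choose A * A ! * B ! = (A+B)! := by
      have := Nat.choose_mul_factorial_mul_factorial (Nat.le_add_right A B)
      rwa [Nat.add_sub_cancel_left] at this
    calc (A+B)! * (A^A * ∏ i ∈ s, (m i)^(m i))
        = ((A+B).choose A * A^A) * (A ! * (B ! * ∏ i ∈ s, (m i)^(m i))) := by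
          rw [← h1]; ring
      _ ≤ ((A+B).choose A * A^A) * (A ! * (B^B * ∏ i ∈ s, (m i)!)) :=
          Nat.mul_le_mul_left _ (Nat.mul_le_mul_left _ ih)
      _ = ((A+B).choose A * (A^A * B^B)) * (A ! * ∏ i ∈ s, (m i)!) := by ring
      _ ≤ (A+B)^(A+B) * (A ! * ∏ i ∈ s, (m i)!) :=
          Nat.mul_le_mul_right _ (choose_mul_le A B)

lemma fact_add_le (M : ℕ) : ∀ k, (M + k)! ≤ M ! * (M + k)^k
  | 0 => by simp
  | k+1 => by
    calc (M+(k+1))! = (M+k+1) * (M+k)! := by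
          rw [show M+(k+1) = (M+k)+1 from rfl, Nat.factorial_succ]
      _ ≤ (M+k+1) * (M ! * (M+k)^k) := Nat.mul_le_mul_left _ (fact_add_le M k)
      _ ≤ (M+k+1) * (M ! * (M+k+1)^k) :=
          Nat.mul_le_mul_left _ (Nat.mul_le_mul_left _ (Nat.pow_le_pow_left (Nat.le_succ _) _))
      _ = M ! * (M+(k+1))^(k+1) := by ring

end NatLemmas


/-- for `y⁽ⁿ⁾ → y ∈ ℝ_{>0}^d` with `n y⁽ⁿ⁾ ∈ ℕ^d` and any
`0 < ε < ∏ᵢ (yᵢ/‖y‖)^{yᵢ/y_min}`, the quantity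
`ε^{n y⁽ⁿ⁾_min} Γ(n‖y⁽ⁿ⁾‖ + d) / ∏ᵢ Γ(n yᵢ⁽ⁿ⁾ + 1)` converges to `0`. -/
theorem tail_bound (d : ℕ) [NeZero d]
    (y : Fin d → ℝ) (hy : ∀ i, 0 < y i)
    (yseq : ℕ → Fin d → ℝ) (hyseq : ∀ (n : ℕ) i, 0 < yseq n i)
    (hnat : ∀ (n : ℕ) i, ∃ m : ℕ, (n : ℝ) * yseq n i = m)
    (hconv : ∀ i, Tendsto (fun n : ℕ => yseq n i) atTop (nhds (y i)))
    (ε : ℝ) (hε : 0 < ε)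
    (hεlt : ε < ∏ i, (y i / ∑ j, y j) ^ (y i / (Finset.univ.inf' Finset.univ_nonempty y))) :
    Tendsto
      (fun n : ℕ =>
        ε ^ ((n : ℝ) * Finset.univ.inf' Finset.univ_nonempty (yseq n)) *
          (Real.Gamma ((n : ℝ) * (∑ i, yseq n i) + d) /
            ∏ i, Real.Gamma ((n : ℝ) * yseq n i + 1)))
      atTop (nhds 0) := by
  obtain ⟨e, rfl⟩ : ∃ e, d = e + 1 := ⟨d - 1, (Nat.succ_pred_eq_of_pos (NeZero.pos d)).symm⟩
  set f : ℕ → ℝ := fun n =>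
    ε ^ ((n : ℝ) * Finset.univ.inf' Finset.univ_nonempty (yseq n)) *
      (Real.Gamma ((n : ℝ) * (∑ i, yseq n i) + (e+1 : ℕ)) /
        ∏ i, Real.Gamma ((n : ℝ) * yseq n i + 1)) with hfdef
  choose m hm using hnat
  set S : ℝ := ∑ j, y j with hSdef
  set ymin : ℝ := Finset.univ.inf' Finset.univ_nonempty y with hymin
  have hS : 0 < S := Finset.sum_pos (fun i _ => hy i) Finset.univ_nonempty
  have hyminpos : 0 < ymin := by
    rw [hymin]
    exact (Finset.lt_inf'_iff _).2 (fun i _ => hy i)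
  -- the limiting constant
  set c : ℝ := ymin * Real.log ε + ∑ i, y i * (Real.log S - Real.log (y i)) with hcdef
  have hc : c < 0 := by
    have hlog := Real.log_lt_log hε hεlt
    rw [Real.log_prod (fun i _ => ne_of_gt (Real.rpow_pos_of_pos (div_pos (hy i) hS) _))]
      at hlog
    have hterm : ∀ i, Real.log ((y i / S) ^ (y i / ymin)) =
        (y i / ymin) * (Real.log (y i) - Real.log S) := fun i => by
      rw [Real.log_rpow (div_pos (hy i) hS), Real.log_div (ne_of_gt (hy i)) (ne_of_gt hS)]
    have h2 : ymin * Real.log ε < ∑ i, y i * (Real.log (y i) - Real.log S) := by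
      calc ymin * Real.log ε
          < ymin * ∑ i, (y i / ymin) * (Real.log (y i) - Real.log S) := by
            refine mul_lt_mul_of_pos_left ?_ hyminpos
            calc Real.log ε < ∑ i, Real.log ((y i / S) ^ (y i / ymin)) := hlog
              _ = ∑ i, (y i / ymin) * (Real.log (y i) - Real.log S) :=
                  Finset.sum_congr rfl (fun i _ => hterm i)
        _ = ∑ i, y i * (Real.log (y i) - Real.log S) := by
            rw [Finset.mul_sum]
            refine Finset.sum_congr rfl (fun i _ => ?_)
            field_simp
    have hsum : (∑ i, y i * (Real.log S - Real.log (y i))) +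
        (∑ i, y i * (Real.log (y i) - Real.log S)) = 0 := by
      rw [← Finset.sum_add_distrib]
      exact Finset.sum_eq_zero (fun i _ => by ring)
    rw [hcdef]
    linarith
  -- sequence version
  set cs : ℕ → ℝ := fun n =>
    (Finset.univ.inf' Finset.univ_nonempty (yseq n)) * Real.log ε +
      ∑ i, yseq n i * (Real.log (∑ j, yseq n j) - Real.log (yseq n i)) with hcsdef
  have hSconv : Tendsto (fun n => ∑ i, yseq n i) atTop (nhds S) := by
    rw [hSdef]; exact tendsto_finset_sum _ (fun i _ => hconv i)
  have hcs : Tendsto cs atTop (nhds c) := by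
    have hinf : Tendsto (fun n => Finset.univ.inf' Finset.univ_nonempty (yseq n))
        atTop (nhds ymin) := by
      rw [hymin]
      exact Filter.Tendsto.finset_inf'_nhds_apply _ (fun i _ => hconv i)
    exact (hinf.mul tendsto_const_nhds).add
      (tendsto_finset_sum _ (fun i _ => (hconv i).mul
        ((hSconv.log (ne_of_gt hS)).sub ((hconv i).log (ne_of_gt (hy i))))))
  have hfpos : ∀ n, 0 ≤ f n := by
    intro n
    refine mul_nonneg (Real.rpow_pos_of_pos hε _).le (div_nonneg ?_ ?_)
    · refine (Real.Gamma_pos_of_pos ?_).le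
      have : (0:ℝ) ≤ (n:ℝ) * ∑ i, yseq n i :=
        mul_nonneg n.cast_nonneg (Finset.sum_nonneg (fun i _ => (hyseq n i).le))
      positivity
    · exact Finset.prod_nonneg (fun i _ => (Real.Gamma_pos_of_pos (by
        have := (hyseq n i).le
        have : (0:ℝ) ≤ (n:ℝ) * yseq n i := mul_nonneg n.cast_nonneg this
        linarith)).le)
  -- key pointwise bound for n ≥ 1
  have key : ∀ n : ℕ, 1 ≤ n →
      f n ≤ (((∑ i, m n i : ℕ) : ℝ) + (e+1 : ℕ)) ^ (e+1) * Real.exp ((n : ℝ) * cs n) := by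
    intro n hn
    have hn0 : (0:ℝ) < n := by exact_mod_cast hn
    have hmpos : ∀ i, 0 < m n i := fun i => by
      have : (0:ℝ) < (m n i : ℝ) := by rw [← hm n i]; exact mul_pos hn0 (hyseq n i)
      exact_mod_cast this
    set M := ∑ i, m n i with hMdef
    have hMpos : 0 < M := Finset.sum_pos (fun i _ => hmpos i) Finset.univ_nonempty
    have hMR : (0:ℝ) < (M:ℝ) := by exact_mod_cast hMpos
    have hSig : 0 < ∑ i, yseq n i := Finset.sum_pos (fun i _ => hyseq n i) Finset.univ_nonempty
    have hMcast : ((M:ℝ)) = (n:ℝ) * ∑ i, yseq n i := by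
      rw [hMdef]; push_cast; rw [Finset.mul_sum]
      exact Finset.sum_congr rfl (fun i _ => (hm n i).symm)
    -- Gamma rewrites
    have h1 : Real.Gamma ((n:ℝ) * (∑ i, yseq n i) + ((e+1:ℕ):ℝ)) = ((M + e).factorial : ℝ) := by
      rw [← hMcast, show ((M:ℝ) + ((e+1:ℕ):ℝ)) = ((M + e : ℕ):ℝ) + 1 by push_cast; ring]
      exact Real.Gamma_nat_eq_factorial (M+e)
    have h2 : (∏ i, Real.Gamma ((n:ℝ) * yseq n i + 1)) = ∏ i, ((m n i).factorial : ℝ) :=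
      Finset.prod_congr rfl (fun i _ => by
        rw [hm n i]; exact Real.Gamma_nat_eq_factorial _)
    -- the combinatorial bound in ℕ
    have hnat1 : (M + e).factorial * ∏ i, (m n i)^(m n i) ≤
        ((M + (e+1))^(e+1) * M^M) * ∏ i, (m n i).factorial := by
      calc (M + e).factorial * ∏ i, (m n i)^(m n i)
          ≤ (M.factorial * (M+e)^e) * ∏ i, (m n i)^(m n i) :=
            Nat.mul_le_mul_right _ (fact_add_le M e)
        _ ≤ (M.factorial * (M+(e+1))^(e+1)) * ∏ i, (m n i)^(m n i) := by
            refine Nat.mul_le_mul_right _ (Nat.mul_le_mul_left _ ?_)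
            calc (M+e)^e ≤ (M+(e+1))^e := Nat.pow_le_pow_left (by omega) _
              _ ≤ (M+(e+1))^(e+1) := Nat.pow_le_pow_right (by omega) (by omega)
        _ = (M+(e+1))^(e+1) * (M.factorial * ∏ i, (m n i)^(m n i)) := by ring
        _ ≤ (M+(e+1))^(e+1) * (M^M * ∏ i, (m n i).factorial) :=
            Nat.mul_le_mul_left _ (by simpa [hMdef] using multinomial_le Finset.univ (m n))
        _ = ((M + (e+1))^(e+1) * M^M) * ∏ i, (m n i).factorial := by ring
    have hprodfac : (0:ℝ) < ∏ i, ((m n i).factorial : ℝ) :=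
      Finset.prod_pos (fun i _ => by positivity)
    have hprodmm : (0:ℝ) < ∏ i, ((m n i):ℝ)^(m n i) :=
      Finset.prod_pos (fun i _ => pow_pos (by exact_mod_cast hmpos i) _)
    have hdiv : ((M + e).factorial : ℝ) / ∏ i, ((m n i).factorial : ℝ) ≤
        (((M:ℝ) + ((e+1:ℕ):ℝ))^(e+1) * (M:ℝ)^M) / ∏ i, ((m n i):ℝ)^(m n i) := by
      rw [div_le_div_iff₀ hprodfac hprodmm]
      calc ((M + e).factorial : ℝ) * ∏ i, ((m n i):ℝ)^(m n i)
          = (((M + e).factorial * ∏ i, (m n i)^(m n i) : ℕ) : ℝ) := by push_cast; ring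
        _ ≤ ((((M + (e+1))^(e+1) * M^M) * ∏ i, (m n i).factorial : ℕ) : ℝ) := by
            exact_mod_cast hnat1
        _ = (((M:ℝ) + ((e+1:ℕ):ℝ))^(e+1) * (M:ℝ)^M) * ∏ i, ((m n i).factorial : ℝ) := by
            push_cast; ring
    -- exponential form
    have hlogm : ∀ i, Real.log ((m n i):ℝ) = Real.log n + Real.log (yseq n i) := fun i => by
      rw [← hm n i, Real.log_mul hn0.ne' (hyseq n i).ne']
    have hMM : ((M:ℝ))^M = Real.exp ((M:ℝ) * Real.log (M:ℝ)) := by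
      rw [← Real.log_pow, Real.exp_log (pow_pos hMR M)]
    have hmm : (∏ i, ((m n i):ℝ)^(m n i)) =
        Real.exp (∑ i, ((m n i):ℝ) * Real.log ((m n i):ℝ)) := by
      rw [Real.exp_sum]
      refine Finset.prod_congr rfl (fun i _ => ?_)
      rw [← Real.exp_log (pow_pos (show (0:ℝ) < ((m n i):ℝ) by exact_mod_cast hmpos i) _),
        Real.log_pow]
    have hre : Real.exp (Real.log ε * ((n:ℝ) * Finset.univ.inf' Finset.univ_nonempty (yseq n))) *
        ((M:ℝ)^M / ∏ i, ((m n i):ℝ)^(m n i)) = Real.exp ((n:ℝ) * cs n) := by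
      rw [hMM, hmm, ← Real.exp_sub, ← Real.exp_add]
      congr 1
      have hsum2 : ∑ i, ((m n i):ℝ) * Real.log ((m n i):ℝ) =
          (n:ℝ) * Real.log n * (∑ i, yseq n i) +
            (n:ℝ) * ∑ i, yseq n i * Real.log (yseq n i) := by
        have hterm : ∀ i, ((m n i):ℝ) * Real.log ((m n i):ℝ) =
            (n:ℝ) * Real.log n * yseq n i + (n:ℝ) * (yseq n i * Real.log (yseq n i)) :=
          fun i => by rw [hlogm i, ← hm n i]; ring
        rw [Finset.sum_congr rfl (fun i _ => hterm i), Finset.sum_add_distrib,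
          ← Finset.mul_sum, ← Finset.mul_sum]
      have hsum3 : ∑ i, yseq n i * (Real.log (∑ j, yseq n j) - Real.log (yseq n i)) =
          Real.log (∑ j, yseq n j) * (∑ i, yseq n i) -
            ∑ i, yseq n i * Real.log (yseq n i) := by
        rw [Finset.mul_sum, ← Finset.sum_sub_distrib]
        refine Finset.sum_congr rfl (fun i _ => by ring)
      rw [hcsdef]
      simp only []
      rw [hsum3, hsum2, hMcast, Real.log_mul hn0.ne' hSig.ne']
      ring
    -- assemble
    have hfn : f n = Real.exp (Real.log ε *
        ((n:ℝ) * Finset.univ.inf' Finset.univ_nonempty (yseq n))) *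
        (((M + e).factorial : ℝ) / ∏ i, ((m n i).factorial : ℝ)) := by
      rw [hfdef]
      simp only []
      rw [h1, h2, Real.rpow_def_of_pos hε]
    calc f n = Real.exp (Real.log ε *
          ((n:ℝ) * Finset.univ.inf' Finset.univ_nonempty (yseq n))) *
          (((M + e).factorial : ℝ) / ∏ i, ((m n i).factorial : ℝ)) := hfn
      _ ≤ Real.exp (Real.log ε *
          ((n:ℝ) * Finset.univ.inf' Finset.univ_nonempty (yseq n))) *
          ((((M:ℝ) + ((e+1:ℕ):ℝ))^(e+1) * (M:ℝ)^M) / ∏ i, ((m n i):ℝ)^(m n i)) :=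
          mul_le_mul_of_nonneg_left hdiv (Real.exp_nonneg _)
      _ = ((M:ℝ) + ((e+1:ℕ):ℝ))^(e+1) * (Real.exp (Real.log ε *
          ((n:ℝ) * Finset.univ.inf' Finset.univ_nonempty (yseq n))) *
          ((M:ℝ)^M / ∏ i, ((m n i):ℝ)^(m n i))) := by ring
      _ = ((M:ℝ) + ((e+1:ℕ):ℝ))^(e+1) * Real.exp ((n:ℝ) * cs n) := by rw [hre]
  -- final comparison function
  set b : ℝ := -(c/2) with hbdef
  have hb : 0 < b := by rw [hbdef]; linarith
  set g : ℕ → ℝ := fun n => ((S + 1 + (e+1 : ℕ)) * n) ^ (e+1) * Real.exp ((n : ℝ) * (c/2)) with hgdef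
  have hg0 : Tendsto g atTop (nhds 0) := by
    set K : ℝ := S + 1 + (e+1 : ℕ) with hK
    have hKpos : 0 < K := by rw [hK]; positivity
    have htop : Tendsto (fun n : ℕ => b * (n:ℝ)) atTop atTop :=
      Tendsto.const_mul_atTop hb tendsto_natCast_atTop_atTop
    have h0 := (Real.tendsto_pow_mul_exp_neg_atTop_nhds_zero (e+1)).comp htop
    have heq : g = fun n : ℕ =>
        (K/b)^(e+1) * ((b*(n:ℝ))^(e+1) * Real.exp (-(b*(n:ℝ)))) := by
      funext n
      rw [hgdef]
      have h1 : (n:ℝ) * (c/2) = -(b*(n:ℝ)) := by rw [hbdef]; ring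
      have h2 : K * (n:ℝ) = (K/b) * (b*(n:ℝ)) := by field_simp
      simp only [h1, h2, mul_pow]
      ring
    rw [heq]
    simpa using (h0.const_mul ((K/b)^(e+1)))
  have hfg : ∀ᶠ n in atTop, f n ≤ g n := by
    filter_upwards [eventually_ge_atTop 1,
      hcs.eventually_le_const (show c < c/2 by linarith),
      hSconv.eventually_le_const (show S < S + 1 by linarith)] with n hn hcn hSn
    refine (key n hn).trans ?_
    rw [hgdef]
    have hn1 : (1:ℝ) ≤ (n:ℝ) := by exact_mod_cast hn
    have hMeq : (((∑ i, m n i : ℕ)):ℝ) = (n:ℝ) * ∑ i, yseq n i := by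
      push_cast
      rw [Finset.mul_sum]
      exact Finset.sum_congr rfl (fun i _ => (hm n i).symm)
    have hbase : (((∑ i, m n i : ℕ)):ℝ) + ((e+1:ℕ):ℝ) ≤ (S + 1 + (e+1:ℕ)) * (n:ℝ) := by
      have h1 : (((∑ i, m n i : ℕ)):ℝ) ≤ (S+1) * (n:ℝ) := by
        rw [hMeq]
        have : ∑ i, yseq n i ≤ S + 1 := hSn
        calc (n:ℝ) * ∑ i, yseq n i ≤ (n:ℝ) * (S+1) :=
              mul_le_mul_of_nonneg_left this n.cast_nonneg
          _ = (S+1) * (n:ℝ) := by ring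
      have h2 : ((e+1:ℕ):ℝ) ≤ ((e+1:ℕ):ℝ) * (n:ℝ) := by
        nlinarith [show (0:ℝ) < ((e+1:ℕ):ℝ) by positivity]
      nlinarith
    refine mul_le_mul ?_ ?_ (Real.exp_nonneg _) (by positivity)
    · exact pow_le_pow_left₀ (by positivity) hbase _
    · exact Real.exp_le_exp.2 (mul_le_mul_of_nonneg_left hcn n.cast_nonneg)
  exact squeeze_zero' (Eventually.of_forall hfpos) hfg hg0
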